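/- Let d ≥ 2, let P be a stationary and ergodic probability measure on (Ω,F), let r ∈ [1,∞), and let u : Ω × ℤ^d → ℝ be a measurable function such that ∇^*u ∈ Stat_P(ℝ^d), (∇^*u)(·,0) ∈ L^r(Ω,ℝ^d), E_P[(∇^*u)(·,0)] = 0, and for P-almost every ω, (Δ u(ω,·))(x) = 0 for all x ∈ ℤ^d. Then for every x ∈ ℤ^d and P-almost every ω ∈ Ω, u(ω,x) = u(ω,0). -/

import Mathlib

open MeasureTheory Filter
open scoped ENNReal Classical

noncomputable section

/-- Points of the lattice `ℤ^d`. -/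
abbrev Zd (d : ℕ) := Fin d → ℤ

/-- The `i`-th standard unit vector of `ℤ^d`. -/
def unitVec {d : ℕ} (i : Fin d) : Zd d := fun j => if j = i then 1 else 0

/-- Environments: a positive conductance for every (unoriented nearest-neighbour) edge,
where the edge `{x, x + e i}` is encoded by the pair `(x, i)`. -/
abbrev Env (d : ℕ) := ((Fin d → ℤ) × Fin d) → {r : ℝ // 0 < r}

/-- The conductance of the edge `{x, x + e i}` in the environment `ω`, as a real number. -/
def cval {d : ℕ} (ω : Env d) (x : Zd d) (i : Fin d) : ℝ := (ω (x, i)).1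

/-- Nearest-neighbour adjacency on `ℤ^d`. -/
def Adj {d : ℕ} (x y : Zd d) : Prop :=
  ∃ i : Fin d, y = x + unitVec i ∨ x = y + unitVec i

/-- The conductance `ω_{xy}` between two nearest neighbours `x ∼ y` (and `0` otherwise). -/
def econd {d : ℕ} (ω : Env d) (x y : Zd d) : ℝ :=
  ∑ i : Fin d, ((if y = x + unitVec i then cval ω x i else 0)
    + (if x = y + unitVec i then cval ω y i else 0))

/-- Discrete gradient `(∇_i u)(x) = u(x+e_i) - u(x)`. -/
def dGrad {d : ℕ} (i : Fin d) (f : Zd d → ℝ) (x : Zd d) : ℝ :=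
  f (x + unitVec i) - f x

/-- Discrete backward gradient `(∇_i^* u)(x) = u(x-e_i) - u(x)`. -/
def dGradStar {d : ℕ} (i : Fin d) (f : Zd d → ℝ) (x : Zd d) : ℝ :=
  f (x - unitVec i) - f x

/-- Discrete divergence `(∇^* ⬝ F)(x) = ∑ i, (F_i(x-e_i) - F_i(x))`. -/
def divStar {d : ℕ} (F : Zd d → Fin d → ℝ) (x : Zd d) : ℝ :=
  ∑ i : Fin d, (F (x - unitVec i) i - F x i)

/-- Discrete Laplacian `Δu = -∑ i, ∇_i^* ∇_i u`. -/
def lap {d : ℕ} (f : Zd d → ℝ) (x : Zd d) : ℝ :=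
  - ∑ i : Fin d, dGradStar i (dGrad i f) x

/-- The open discrete box `D_R = {x : |x|_∞ < R}`. -/
def boxD (d R : ℕ) : Finset (Zd d) :=
  Fintype.piFinset fun _ => Finset.Ioo (-(R : ℤ)) (R : ℤ)

/-- The closed discrete box `D̄_R = {x : |x|_∞ ≤ R}`. -/
def boxC (d R : ℕ) : Finset (Zd d) :=
  Fintype.piFinset fun _ => Finset.Icc (-(R : ℤ)) (R : ℤ)

/-- The discrete boundary `∂D_R = {x : |x|_∞ = R}`. -/
def bdry (d R : ℕ) : Finset (Zd d) := boxC d R \ boxD d R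

/-- The reduced boundary `∂̃D_R` of points of `∂D_R` having a neighbour in `D_R`. -/
def tbdry (d R : ℕ) : Finset (Zd d) :=
  (bdry d R).filter fun x => ∃ y ∈ boxD d R, Adj x y

/-- The oriented edge set `E_R = {(x,y) : x ∼ y, |x+y|_∞ < 2R}`. -/
def ER (d R : ℕ) : Finset (Zd d × Zd d) :=
  ((boxC d R) ×ˢ (boxC d R)).filter fun e =>
    Adj e.1 e.2 ∧ ∀ i, |e.1 i + e.2 i| < 2 * (R : ℤ)

/-- The normal edges `E_R^{nor} = {(x,y) : x ∈ D_R, y ∈ ∂D_R, x ∼ y}`. -/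
def Enor (d R : ℕ) : Finset (Zd d × Zd d) :=
  ((boxD d R) ×ˢ (bdry d R)).filter fun e => Adj e.1 e.2

/-- The tangential edges `E_R^{tan} = {(x,y) : x, y ∈ ∂D_R, x ∼ y}`. -/
def Etan (d R : ℕ) : Finset (Zd d × Zd d) :=
  ((bdry d R) ×ˢ (bdry d R)).filter fun e => Adj e.1 e.2

/-- Normalized `ℓ^r` norm `⦀u⦀_{r,A}` on a finite set. -/
def avNorm {V : Type*} (r : ℝ) (A : Finset V) (u : V → ℝ) : ℝ :=
  ((∑ x ∈ A, |u x| ^ r) / (A.card : ℝ)) ^ (1 / r)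

/-- Sup norm `⦀u⦀_{∞,A}` on a finite set. -/
def supNorm {V : Type*} (A : Finset V) (u : V → ℝ) : ℝ :=
  ⨆ x ∈ A, |u x|

/-- Normalized `ℓ^r` norm for an extended exponent `r ∈ [1,∞]`. -/
def avNormE {V : Type*} (r : ℝ≥0∞) (A : Finset V) (u : V → ℝ) : ℝ :=
  if r = ∞ then supNorm A u else avNorm r.toReal A u

/-- The exponent `2p/(p-1)`, with the convention that it equals `2` for `p = ∞`. -/
def dualExp (p : ℝ≥0∞) : ℝ :=
  if p = ∞ then 2 else 2 * p.toReal / (p.toReal - 1)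

/-- The exponent `2p/(p+1)`, with the convention that it equals `2` for `p = ∞`. -/
def coExp (p : ℝ≥0∞) : ℝ :=
  if p = ∞ then 2 else 2 * p.toReal / (p.toReal + 1)

/-- Euclidean norm on `ℝ^d`. -/
def vecNorm {d : ℕ} (v : Fin d → ℝ) : ℝ := Real.sqrt (∑ i, v i ^ 2)

/-- The translation `τ_a` acting on environments. -/
def shiftEnv {d : ℕ} (a : Zd d) (ω : Env d) : Env d := fun e => ω (e.1 + a, e.2)

/-- Stationarity of a measure on environments. -/
def Stationary {d : ℕ} (P : Measure (Env d)) : Prop :=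
  ∀ a : Zd d, MeasurePreserving (shiftEnv a) P P

/-- Ergodicity of a measure on environments w.r.t. the translations. -/
def ErgodicEnv {d : ℕ} (P : Measure (Env d)) : Prop :=
  ∀ A : Set (Env d), MeasurableSet A → (∀ a : Zd d, shiftEnv a ⁻¹' A = A) →
    P A = 0 ∨ P A = 1

/-- Stationary (`Stat_P`) random fields. -/
def StatP {d : ℕ} {E : Type*} [MeasurableSpace E] (P : Measure (Env d))
    (f : Env d → Zd d → E) : Prop :=
  Measurable (Function.uncurry f) ∧
    ∀ᵐ ω ∂P, ∀ x : Zd d, f ω x = f (shiftEnv x ω) 0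

/-- The horizontal derivative `D_i` on functions of the environment. -/
def Dop {d : ℕ} (i : Fin d) (ζ : Env d → ℝ) : Env d → ℝ :=
  fun ω => ζ (shiftEnv (unitVec i) ω) - ζ ω

/-- The horizontal derivative `D_i^*` on functions of the environment. -/
def DopStar {d : ℕ} (i : Fin d) (ζ : Env d → ℝ) : Env d → ℝ :=
  fun ω => ζ (shiftEnv (-(unitVec i)) ω) - ζ ω

/-- The reflection of `ℤ^d` flipping the `j`-th coordinate. -/
def reflPt {d : ℕ} (j : Fin d) (x : Zd d) : Zd d := fun k => if k = j then -x k else x k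

/-- The reflection `ρ_j` acting on environments. -/
def reflEnv {d : ℕ} (j : Fin d) (ω : Env d) : Env d :=
  fun e => ω (if e.2 = j then reflPt j e.1 - unitVec j else reflPt j e.1, e.2)

section AuxShift
variable {d : ℕ}

lemma shiftEnv_shiftEnv (a b : Zd d) (ω : Env d) :
    shiftEnv a (shiftEnv b ω) = shiftEnv (a + b) ω := by
  funext e; simp [shiftEnv, add_assoc]

lemma shiftEnv_zero' (ω : Env d) : shiftEnv (0 : Zd d) ω = ω := by
  funext e; simp [shiftEnv]

lemma measurable_shiftEnv (a : Zd d) : Measurable (shiftEnv (d := d) a) :=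
  measurable_pi_lambda _ fun _ => measurable_pi_apply _

def shiftMEquiv (a : Zd d) : Env d ≃ᵐ Env d where
  toFun := shiftEnv a
  invFun := shiftEnv (-a)
  left_inv ω := by rw [shiftEnv_shiftEnv, neg_add_cancel, shiftEnv_zero']
  right_inv ω := by rw [shiftEnv_shiftEnv, add_neg_cancel, shiftEnv_zero']
  measurable_toFun := measurable_shiftEnv a
  measurable_invFun := measurable_shiftEnv (-a)

lemma sum_smul_unitVec (x : Zd d) : ∑ j : Fin d, x j • unitVec j = x := by
  funext k
  simp only [Finset.sum_apply, Pi.smul_apply, unitVec, smul_eq_mul, mul_ite, mul_one, mul_zero]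
  rw [Finset.sum_ite_eq Finset.univ k x]  -- if condition is (k = j)?
  simp
end AuxShift

-- pointwise abs lemma
lemma abs_add_lt_of_neg_of_pos {s t : ℝ} (hs : s < 0) (ht : 0 < t) :
    |s + t| < |s| + |t| := by
  rw [abs_of_neg hs, abs_of_pos ht]
  rcases abs_cases (s + t) with ⟨h, _⟩ | ⟨h, _⟩ <;> linarith

lemma eq_of_abs_sum_eq {ι : Type*} [Fintype ι] (x : ι → ℝ)
    (h : ∀ c : ℚ, ∑ b, |x b - (c : ℝ)| = |∑ b, (x b - (c : ℝ))|) (b b' : ι) :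
    x b = x b' := by
  suffices haux : ∀ b b' : ι, ¬ (x b < x b') by
    rcases lt_trichotomy (x b) (x b') with hlt | he | hgt
    · exact absurd hlt (haux _ _)
    · exact he
    · exact absurd hgt (haux _ _)
  intro b b' hlt
  obtain ⟨c, hc1, hc2⟩ := exists_rat_btwn hlt
  have hbb' : b' ≠ b := by rintro rfl; exact lt_irrefl _ hlt
  have hmem : b' ∈ Finset.univ.erase b := Finset.mem_erase.2 ⟨hbb', Finset.mem_univ _⟩
  set y : ι → ℝ := fun i => x i - (c : ℝ) with hy
  have e1 : ∀ f : ι → ℝ, ∑ i, f i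
      = f b + (f b' + ∑ i ∈ (Finset.univ.erase b).erase b', f i) := by
    intro f
    rw [Finset.add_sum_erase _ f hmem, Finset.add_sum_erase _ f (Finset.mem_univ b)]
  have hyb : y b < 0 := by simp only [hy]; linarith
  have hyb' : 0 < y b' := by simp only [hy]; linarith
  have h1 : |y b + y b'| < |y b| + |y b'| := abs_add_lt_of_neg_of_pos hyb hyb'
  have key : |∑ i, y i| < ∑ i, |y i| := by
    rw [e1 y, e1 (fun i => |y i|)]
    set S := ∑ i ∈ (Finset.univ.erase b).erase b', y i with hS
    calc |y b + (y b' + S)| = |(y b + y b') + S| := by ring_nf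
      _ ≤ |y b + y b'| + |S| := abs_add_le _ _
      _ ≤ |y b + y b'| + ∑ i ∈ (Finset.univ.erase b).erase b', |y i| := by
          exact add_le_add le_rfl (Finset.abs_sum_le_sum_abs _ _)
      _ < |y b| + (|y b'| + ∑ i ∈ (Finset.univ.erase b).erase b', |y i|) := by linarith
  exact absurd (h c) (by rw [show (∑ i, |x i - (c:ℝ)|) = ∑ i, |y i| from rfl,
    show (∑ i, (x i - (c:ℝ))) = ∑ i, y i from rfl]; exact ne_of_gt key)

section ErgodicAux
set_option synthInstance.maxHeartbeats 1000000
set_option maxHeartbeats 1000000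
variable {d : ℕ}

lemma shiftInvariant_add {P : Measure (Env d)} (hstat : Stationary P)
    {ζ : Env d → ℝ} {a b : Zd d}
    (ha : (fun ω => ζ (shiftEnv a ω)) =ᵐ[P] ζ) (hb : (fun ω => ζ (shiftEnv b ω)) =ᵐ[P] ζ) :
    (fun ω => ζ (shiftEnv (a + b) ω)) =ᵐ[P] ζ := by
  have h1 : ((fun ω => ζ (shiftEnv a ω)) ∘ shiftEnv b) =ᵐ[P] (ζ ∘ shiftEnv b) :=
    (hstat b).quasiMeasurePreserving.ae_eq_comp ha
  have h2 : (fun ω => ζ (shiftEnv (a + b) ω)) =ᵐ[P] (ζ ∘ shiftEnv b) := by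
    refine EventuallyEq.trans (Eventually.of_forall fun ω => ?_) h1
    simp only [Function.comp_apply, shiftEnv_shiftEnv]
  exact h2.trans hb

lemma shiftInvariant_neg {P : Measure (Env d)} (hstat : Stationary P)
    {ζ : Env d → ℝ} {a : Zd d}
    (ha : (fun ω => ζ (shiftEnv a ω)) =ᵐ[P] ζ) :
    (fun ω => ζ (shiftEnv (-a) ω)) =ᵐ[P] ζ := by
  have h1 : ((fun ω => ζ (shiftEnv a ω)) ∘ shiftEnv (-a)) =ᵐ[P] (ζ ∘ shiftEnv (-a)) :=
    (hstat (-a)).quasiMeasurePreserving.ae_eq_comp ha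
  have h2 : ((fun ω => ζ (shiftEnv a ω)) ∘ shiftEnv (-a)) = ζ := by
    funext ω
    simp only [Function.comp_apply, shiftEnv_shiftEnv, add_neg_cancel, shiftEnv_zero']
  rw [h2] at h1
  exact h1.symm

lemma shiftInvariant_all {P : Measure (Env d)} (hstat : Stationary P)
    {ζ : Env d → ℝ}
    (hgen : ∀ i : Fin d, (fun ω => ζ (shiftEnv (unitVec i) ω)) =ᵐ[P] ζ) :
    ∀ a : Zd d, (fun ω => ζ (shiftEnv a ω)) =ᵐ[P] ζ := by
  have hzero : (fun ω => ζ (shiftEnv (0 : Zd d) ω)) =ᵐ[P] ζ :=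
    Eventually.of_forall fun ω => congrArg ζ (shiftEnv_zero' ω)
  have hz : ∀ (n : ℤ) (i : Fin d), (fun ω => ζ (shiftEnv (n • unitVec i) ω)) =ᵐ[P] ζ := by
    intro n i
    induction n using Int.induction_on with
    | zero => simpa using hzero
    | succ n ih =>
        have := shiftInvariant_add hstat (hgen i) ih
        have harg : unitVec i + (n : ℤ) • unitVec i = ((n : ℤ) + 1) • unitVec i := by
          rw [add_zsmul, one_zsmul]; abel
        rwa [harg] at this
    | pred n ih =>
        have := shiftInvariant_add hstat (shiftInvariant_neg hstat (hgen i)) ih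
        have harg : -unitVec i + (-(n : ℤ)) • unitVec i = (-(n : ℤ) - 1) • unitVec i := by
          rw [sub_zsmul, one_zsmul]; abel
        rwa [harg] at this
  intro a
  have hsum : ∀ s : Finset (Fin d),
      (fun ω => ζ (shiftEnv (∑ j ∈ s, a j • unitVec j) ω)) =ᵐ[P] ζ := by
    intro s
    induction s using Finset.induction_on with
    | empty => simpa using hzero
    | @insert j s' hj ih =>
        have := shiftInvariant_add hstat (hz (a j) j) ih
        rw [show (∑ k ∈ insert j s', a k • unitVec k) = a j • unitVec j + ∑ k ∈ s', a k • unitVec k from Finset.sum_insert hj]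
        exact this
  have := hsum Finset.univ
  rwa [sum_smul_unitVec] at this

lemma ae_eq_const_of_invariant {P : Measure (Env d)} [IsProbabilityMeasure P]
    (herg : ErgodicEnv P) (ζ : Env d → ℝ) (hm : Measurable ζ)
    (hinv : ∀ a : Zd d, (fun ω => ζ (shiftEnv a ω)) =ᵐ[P] ζ) :
    ∃ c : ℝ, ζ =ᵐ[P] fun _ => c := by
  have hall : ∀ᵐ ω ∂P, ∀ x : Zd d, ζ (shiftEnv x ω) = ζ ω := ae_all_iff.2 fun x => hinv x
  have hmsle : ∀ c : ℝ, MeasurableSet {ω : Env d | ζ ω ≤ c} := fun c =>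
    measurableSet_le hm measurable_const
  have hdich : ∀ c : ℝ, P {ω | ζ ω ≤ c} = 0 ∨ P {ω | ζ ω ≤ c} = 1 := by
    intro c
    set A := {ω : Env d | ∀ x : Zd d, ζ (shiftEnv x ω) ≤ c} with hA
    have hAm : MeasurableSet A := by
      have : A = ⋂ x : Zd d, {ω : Env d | ζ (shiftEnv x ω) ≤ c} := by
        ext ω; simp [hA, Set.mem_iInter]
      rw [this]
      exact MeasurableSet.iInter fun x =>
        measurableSet_le (hm.comp (measurable_shiftEnv x)) measurable_const
    have hAinv : ∀ a : Zd d, shiftEnv a ⁻¹' A = A := by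
      intro a
      ext ω
      simp only [Set.mem_preimage, hA, Set.mem_setOf_eq, shiftEnv_shiftEnv]
      constructor
      · intro h y
        have := h (y - a)
        rwa [sub_add_cancel] at this
      · intro h x
        exact h (x + a)
    have hEq : P {ω | ζ ω ≤ c} = P A := by
      refine (measure_congr ?_).symm
      refine hall.mono fun ω hω => ?_
      simp only [hA, Set.mem_setOf_eq, eq_iff_iff]
      constructor
      · intro h
        have := h 0
        rwa [shiftEnv_zero'] at this
      · intro h x
        rw [hω x]; exact h
    rw [hEq]
    exact herg A hAm hAinv
  -- turn measure-one statements into a.e. statements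
  have haemem : ∀ c : ℝ, P {ω | ζ ω ≤ c} = 1 → ∀ᵐ ω ∂P, ζ ω ≤ c := by
    intro c h
    have hc := measure_compl (hmsle c) (measure_ne_top P _)
    rw [h, measure_univ, tsub_self] at hc
    have := measure_eq_zero_iff_ae_notMem.1 hc
    refine this.mono fun ω hω => ?_
    simpa using hω
  have haenmem : ∀ c : ℝ, P {ω | ζ ω ≤ c} = 0 → ∀ᵐ ω ∂P, ¬ ζ ω ≤ c := by
    intro c h
    exact measure_eq_zero_iff_ae_notMem.1 h
  classical
  set S : Set ℝ := {c | P {ω | ζ ω ≤ c} = 1} with hSdef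
  have hSup : ∀ c c', c ≤ c' → c ∈ S → c' ∈ S := by
    intro c c' hcc hc
    have hle : P {ω | ζ ω ≤ c} ≤ P {ω | ζ ω ≤ c'} :=
      measure_mono fun ω h => le_trans h hcc
    rcases hdich c' with h0 | h1
    · exfalso
      rw [hc, h0] at hle
      simp at hle
    · exact h1
  have hS_ne : S.Nonempty := by
    by_contra hne
    have h0 : ∀ n : ℕ, P {ω | ζ ω ≤ (n : ℝ)} = 0 := fun n =>
      (hdich _).resolve_right fun h1 => hne ⟨_, h1⟩
    have hu : P (⋃ n : ℕ, {ω | ζ ω ≤ (n : ℝ)}) = 0 := measure_iUnion_null h0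
    have huniv : (⋃ n : ℕ, {ω : Env d | ζ ω ≤ (n : ℝ)}) = Set.univ := by
      ext ω
      simp only [Set.mem_iUnion, Set.mem_univ, iff_true, Set.mem_setOf_eq]
      exact exists_nat_ge (ζ ω)
    rw [huniv, measure_univ] at hu
    simp at hu
  have hS_bdd : BddBelow S := by
    by_contra hbd
    have hn : ∀ n : ℕ, P {ω | ζ ω ≤ -(n : ℝ)} = 1 := by
      intro n
      rcases not_bddBelow_iff.1 hbd (-(n : ℝ)) with ⟨c, hcS, hlt⟩
      exact hSup c _ hlt.le hcS
    have hae : ∀ᵐ ω ∂P, ∀ n : ℕ, ζ ω ≤ -(n : ℝ) := ae_all_iff.2 fun n => haemem _ (hn n)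
    haveI : (MeasureTheory.ae P).NeBot := ae_neBot.2 (IsProbabilityMeasure.ne_zero P)
    obtain ⟨ω, hω⟩ := hae.exists
    obtain ⟨n, hn'⟩ := exists_nat_gt (-(ζ ω))
    have := hω n
    linarith
  refine ⟨sInf S, ?_⟩
  have hgt : ∀ c, sInf S < c → P {ω | ζ ω ≤ c} = 1 := by
    intro c hc
    obtain ⟨s, hsS, hs⟩ := exists_lt_of_csInf_lt hS_ne hc
    exact hSup s c hs.le hsS
  have hlt : ∀ c, c < sInf S → P {ω | ζ ω ≤ c} = 0 := by
    intro c hc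
    rcases hdich c with h0 | h1
    · exact h0
    · exact absurd (csInf_le hS_bdd h1) (not_le.2 hc)
  have hub : ∀ᵐ ω ∂P, ∀ n : ℕ, ζ ω ≤ sInf S + 1 / ((n : ℝ) + 1) :=
    ae_all_iff.2 fun n => haemem _ (hgt _ (by
      have : (0:ℝ) < 1 / ((n : ℝ) + 1) := by positivity
      linarith))
  have hlb : ∀ᵐ ω ∂P, ∀ n : ℕ, ¬ ζ ω ≤ sInf S - 1 / ((n : ℝ) + 1) :=
    ae_all_iff.2 fun n => haenmem _ (hlt _ (by
      have : (0:ℝ) < 1 / ((n : ℝ) + 1) := by positivity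
      linarith))
  filter_upwards [hub, hlb] with ω h1 h2
  have hle : ζ ω ≤ sInf S := by
    by_contra hgt'
    push_neg at hgt'
    obtain ⟨n, hn⟩ := exists_nat_one_div_lt (sub_pos.2 hgt')
    have := h1 n
    linarith
  have hge : sInf S ≤ ζ ω := by
    by_contra hlt'
    push_neg at hlt'
    obtain ⟨n, hn⟩ := exists_nat_one_div_lt (sub_pos.2 hlt')
    have := h2 n
    push_neg at this
    linarith
  exact le_antisymm hle hge

end ErgodicAux
section DetAux
variable {d : ℕ}

lemma lap_mean_value (f : Zd d → ℝ) (x : Zd d) (h : lap f x = 0) :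
    ∑ i : Fin d, (f (x - unitVec i) + f (x + unitVec i)) = (2 * (d : ℝ)) * f x := by
  have h1 : ∑ i : Fin d, ((f x - f (x - unitVec i)) - (f (x + unitVec i) - f x)) = 0 := by
    have h2 : -∑ i : Fin d, dGradStar i (dGrad i f) x = 0 := h
    have h3 := neg_eq_zero.mp h2
    rw [← h3]
    refine Finset.sum_congr rfl fun i _ => ?_
    simp only [dGradStar, dGrad, sub_add_cancel]
  have h3 : ∑ i : Fin d, (f (x - unitVec i) + f (x + unitVec i))
      = ∑ i : Fin d, ((2:ℝ) * f x)
        - ∑ i : Fin d, ((f x - f (x - unitVec i)) - (f (x + unitVec i) - f x)) := by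
    rw [← Finset.sum_sub_distrib]
    exact Finset.sum_congr rfl fun i _ => by ring
  rw [h3, h1, sub_zero, Finset.sum_const, Finset.card_univ, Fintype.card_fin, nsmul_eq_mul]
  ring

lemma harm_grad_identity (U : Zd d → ℝ)
    (hU : ∀ x, ∑ i : Fin d, (U (x - unitVec i) + U (x + unitVec i)) = (2 * (d : ℝ)) * U x)
    (j : Fin d) :
    ∑ i : Fin d, ((U (unitVec i - unitVec j) - U (unitVec i))
        + (U (-unitVec i - unitVec j) - U (-unitVec i)))
      = (2 * (d : ℝ)) * (U ((0 : Zd d) - unitVec j) - U 0) := by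
  have A := hU (-unitVec j)
  have B := hU 0
  have L1 : ∑ i : Fin d, ((U (unitVec i - unitVec j) - U (unitVec i))
        + (U (-unitVec i - unitVec j) - U (-unitVec i)))
      = (∑ i : Fin d, (U (-unitVec j - unitVec i) + U (-unitVec j + unitVec i)))
        - ∑ i : Fin d, (U ((0 : Zd d) - unitVec i) + U ((0 : Zd d) + unitVec i)) := by
    rw [← Finset.sum_sub_distrib]
    refine Finset.sum_congr rfl fun i _ => ?_
    rw [show unitVec i - unitVec j = -unitVec j + unitVec i from by abel,
      show -unitVec i - unitVec j = -unitVec j - unitVec i from by abel,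
      show (0 : Zd d) - unitVec i = -unitVec i from zero_sub _,
      show (0 : Zd d) + unitVec i = unitVec i from zero_add _]
    ring
  rw [L1, A, B, show (0 : Zd d) - unitVec j = -unitVec j from zero_sub _]
  ring

lemma const_of_steps (U : Zd d → ℝ)
    (h : ∀ (x : Zd d) (j : Fin d), U (x - unitVec j) = U x) (x : Zd d) : U x = U 0 := by
  have h2 : ∀ (y : Zd d) (j : Fin d), U (y + unitVec j) = U y := by
    intro y j
    have := h (y + unitVec j) j
    rw [add_sub_cancel_right] at this
    exact this.symm
  have hz : ∀ (n : ℤ) (j : Fin d) (y : Zd d), U (y + n • unitVec j) = U y := by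
    intro n j
    induction n using Int.induction_on with
    | zero => intro y; simp
    | succ n ih =>
        intro y
        have harg : y + ((n : ℤ) + 1) • unitVec j = (y + (n : ℤ) • unitVec j) + unitVec j := by
          rw [add_zsmul, one_zsmul]; abel
        rw [harg, h2, ih]
    | pred n ih =>
        intro y
        have harg : y + (-(n : ℤ) - 1) • unitVec j = (y + (-(n : ℤ)) • unitVec j) - unitVec j := by
          rw [sub_zsmul, one_zsmul]; abel
        rw [harg, h, ih]
  have hdec : ∀ s : Finset (Fin d), U (∑ j ∈ s, x j • unitVec j) = U 0 := by
    intro s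
    induction s using Finset.induction_on with
    | empty => simp
    | @insert j s' hj ih =>
        rw [show (∑ k ∈ insert j s', x k • unitVec k)
            = (∑ k ∈ s', x k • unitVec k) + x j • unitVec j from by
          rw [Finset.sum_insert hj]; abel]
        rw [hz, ih]
  have := hdec Finset.univ
  rwa [sum_smul_unitVec] at this

end DetAux
section DetAux2
variable {d : ℕ}
lemma measurableEmbedding_shiftEnv (v : Zd d) :
    MeasurableEmbedding (shiftEnv (d := d) v) :=
  (shiftMEquiv v).measurableEmbedding
end DetAux2
set_option maxHeartbeats 2000000 in
set_option synthInstance.maxHeartbeats 1000000 in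
/-- Lemma `d21`: if `∇^*u` is stationary, `L^r` at the origin with mean zero,
and `u(ω,·)` is P-a.s. harmonic for the discrete Laplacian, then for every `x`,
P-a.s. `u(ω,x) = u(ω,0)`. -/
theorem stationary_gradient_harmonic_constant
    (d : ℕ) (hd : 2 ≤ d)
    (P : Measure (Env d)) [IsProbabilityMeasure P]
    (hstat : Stationary P) (herg : ErgodicEnv P)
    (r : ℝ) (hr : 1 ≤ r)
    (u : Env d → Zd d → ℝ) (humeas : Measurable (Function.uncurry u))
    (hstatg : StatP P (fun ω x => fun i : Fin d => u ω (x - unitVec i) - u ω x))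
    (hint : MemLp (fun ω => fun i : Fin d => u ω (0 - unitVec i) - u ω 0)
      (ENNReal.ofReal r) P)
    (hmean : ∀ i : Fin d, ∫ ω, (u ω (0 - unitVec i) - u ω 0) ∂P = 0)
    (hharm : ∀ᵐ ω ∂P, ∀ x : Zd d, lap (u ω) x = 0) :
    ∀ x : Zd d, ∀ᵐ ω ∂P, u ω x = u ω 0 := by
  classical
  have hd0 : (0:ℝ) < 2 * (d:ℝ) := by
    have h : (0:ℝ) < (d:ℝ) := by exact_mod_cast (by omega : 0 < d)
    linarith
  set g : Env d → Fin d → ℝ := fun ω i => u ω (0 - unitVec i) - u ω 0 with hg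
  set vd : Fin d × Bool → Zd d := fun p => cond p.2 (unitVec p.1) (-unitVec p.1) with hvd
  -- measurability
  have hmu : ∀ x : Zd d, Measurable fun ω => u ω x := fun x =>
    humeas.comp (measurable_id.prodMk measurable_const)
  have hgm : ∀ j, Measurable fun ω => g ω j := fun j => (hmu _).sub (hmu _)
  -- integrability of the gradient components
  have hint1 : ∀ j, Integrable (fun ω => g ω j) P := by
    intro j
    have h1 : MemLp (fun ω => g ω j) (ENNReal.ofReal r) P :=
      hint.mono ((hgm j).aestronglyMeasurable) (Eventually.of_forall fun ω => by
        simpa using norm_le_pi_norm (fun i => u ω (0 - unitVec i) - u ω 0) j)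
    exact memLp_one_iff_integrable.mp
      (h1.mono_exponent (ENNReal.one_le_ofReal.2 hr))
  -- stationarity of the gradient, componentwise
  have hgx : ∀ᵐ ω ∂P, ∀ (x : Zd d) (j : Fin d),
      u ω (x - unitVec j) - u ω x = g (shiftEnv x ω) j := by
    filter_upwards [hstatg.2] with ω hω x j
    exact congrFun (hω x) j
  -- mean value property
  have hH : ∀ᵐ ω ∂P, ∀ x : Zd d,
      ∑ i : Fin d, (u ω (x - unitVec i) + u ω (x + unitVec i)) = (2*(d:ℝ)) * u ω x := by
    filter_upwards [hharm] with ω hω x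
    exact lap_mean_value (u ω) x (hω x)
  -- harmonicity of the gradient as a function on the environment
  have hH1 : ∀ᵐ ω ∂P, ∀ j : Fin d,
      ∑ p : Fin d × Bool, g (shiftEnv (vd p) ω) j = (2*(d:ℝ)) * g ω j := by
    filter_upwards [hgx, hH] with ω h1 h2
    intro j
    have hsum : ∑ p : Fin d × Bool, g (shiftEnv (vd p) ω) j
        = ∑ i : Fin d, ((u ω (unitVec i - unitVec j) - u ω (unitVec i))
            + (u ω (-unitVec i - unitVec j) - u ω (-unitVec i))) := by
      rw [Fintype.sum_prod_type]
      refine Finset.sum_congr rfl fun i _ => ?_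
      rw [Fintype.sum_bool]
      have e1 : vd (i, true) = unitVec i := rfl
      have e2 : vd (i, false) = -unitVec i := rfl
      rw [e1, e2, ← h1 (unitVec i) j, ← h1 (-unitVec i) j]
    rw [hsum, harm_grad_identity (u ω) h2 j]
  -- equality in the triangle inequality, for every rational shift
  have hFG : ∀ (j : Fin d) (c : ℚ), ∀ᵐ ω ∂P,
      ∑ p : Fin d × Bool, |g (shiftEnv (vd p) ω) j - (c:ℝ)|
        = |∑ p : Fin d × Bool, (g (shiftEnv (vd p) ω) j - (c:ℝ))| := by
    intro j c
    have hφm : Measurable fun ω => |g ω j - (c:ℝ)| :=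
      ((hgm j).sub measurable_const).abs
    have hφi : Integrable (fun ω => |g ω j - (c:ℝ)|) P :=
      ((hint1 j).sub (integrable_const _)).abs
    have hcomp : ∀ v : Zd d, Integrable (fun ω => |g (shiftEnv v ω) j - (c:ℝ)|) P := fun v =>
      ((hstat v).integrable_comp_emb (measurableEmbedding_shiftEnv v)).2 hφi
    have hcomp' : ∀ v : Zd d, Integrable (fun ω => g (shiftEnv v ω) j - (c:ℝ)) P := fun v =>
      ((hstat v).integrable_comp_emb (measurableEmbedding_shiftEnv v)).2
        ((hint1 j).sub (integrable_const _))
    have hintcomp : ∀ v : Zd d,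
        ∫ ω, |g (shiftEnv v ω) j - (c:ℝ)| ∂P = ∫ ω, |g ω j - (c:ℝ)| ∂P := fun v =>
      (hstat v).integral_comp (measurableEmbedding_shiftEnv v) (fun ω => |g ω j - (c:ℝ)|)
    have hFi : Integrable (fun ω => ∑ p : Fin d × Bool, |g (shiftEnv (vd p) ω) j - (c:ℝ)|) P :=
      integrable_finset_sum _ fun p _ => hcomp (vd p)
    have hSi : Integrable (fun ω => ∑ p : Fin d × Bool, (g (shiftEnv (vd p) ω) j - (c:ℝ))) P :=
      integrable_finset_sum _ fun p _ => hcomp' (vd p)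
    have hGi : Integrable (fun ω => |∑ p : Fin d × Bool, (g (shiftEnv (vd p) ω) j - (c:ℝ))|) P :=
      hSi.abs
    have hIF : ∫ ω, (∑ p : Fin d × Bool, |g (shiftEnv (vd p) ω) j - (c:ℝ)|) ∂P
        = (2*(d:ℝ)) * ∫ ω, |g ω j - (c:ℝ)| ∂P := by
      rw [integral_finset_sum _ fun p _ => hcomp (vd p)]
      have : ∀ p : Fin d × Bool, p ∈ Finset.univ →
          ∫ ω, |g (shiftEnv (vd p) ω) j - (c:ℝ)| ∂P = ∫ ω, |g ω j - (c:ℝ)| ∂P :=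
        fun p _ => hintcomp (vd p)
      rw [Finset.sum_congr rfl this, Finset.sum_const, Finset.card_univ]
      simp only [Fintype.card_prod, Fintype.card_fin, Fintype.card_bool, nsmul_eq_mul]
      push_cast
      ring
    have hIG : ∫ ω, |∑ p : Fin d × Bool, (g (shiftEnv (vd p) ω) j - (c:ℝ))| ∂P
        = (2*(d:ℝ)) * ∫ ω, |g ω j - (c:ℝ)| ∂P := by
      have hGae : (fun ω => |∑ p : Fin d × Bool, (g (shiftEnv (vd p) ω) j - (c:ℝ))|)
          =ᵐ[P] fun ω => (2*(d:ℝ)) * |g ω j - (c:ℝ)| := by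
        filter_upwards [hH1] with ω hω
        have hs : ∑ p : Fin d × Bool, (g (shiftEnv (vd p) ω) j - (c:ℝ))
            = (2*(d:ℝ)) * (g ω j - (c:ℝ)) := by
          rw [Finset.sum_sub_distrib, hω j, Finset.sum_const, Finset.card_univ]
          simp only [Fintype.card_prod, Fintype.card_fin, Fintype.card_bool, nsmul_eq_mul]
          push_cast
          ring
        rw [hs, abs_mul, abs_of_pos hd0]
      rw [integral_congr_ae hGae, integral_const_mul]
    have hIz : ∫ ω, ((∑ p : Fin d × Bool, |g (shiftEnv (vd p) ω) j - (c:ℝ)|)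
        - |∑ p : Fin d × Bool, (g (shiftEnv (vd p) ω) j - (c:ℝ))|) ∂P = 0 := by
      rw [integral_sub hFi hGi, hIF, hIG, sub_self]
    have hnn : 0 ≤ fun ω => (∑ p : Fin d × Bool, |g (shiftEnv (vd p) ω) j - (c:ℝ)|)
        - |∑ p : Fin d × Bool, (g (shiftEnv (vd p) ω) j - (c:ℝ))| := fun ω =>
      sub_nonneg.2 (Finset.abs_sum_le_sum_abs _ _)
    have hae0 := (integral_eq_zero_iff_of_nonneg hnn (hFi.sub hGi)).1 hIz
    filter_upwards [hae0] with ω hω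
    have : (∑ p : Fin d × Bool, |g (shiftEnv (vd p) ω) j - (c:ℝ)|)
        - |∑ p : Fin d × Bool, (g (shiftEnv (vd p) ω) j - (c:ℝ))| = 0 := hω
    linarith
  -- invariance under the generators
  have hmain : ∀ᵐ ω ∂P, ∀ (j : Fin d) (p : Fin d × Bool),
      g (shiftEnv (vd p) ω) j = g ω j := by
    have hc : ∀ᵐ ω ∂P, ∀ (j : Fin d) (c : ℚ),
        ∑ p : Fin d × Bool, |g (shiftEnv (vd p) ω) j - (c:ℝ)|
          = |∑ p : Fin d × Bool, (g (shiftEnv (vd p) ω) j - (c:ℝ))| :=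
      ae_all_iff.2 fun j => ae_all_iff.2 fun c => hFG j c
    filter_upwards [hc, hH1] with ω h1 h2
    intro j p
    have hall := eq_of_abs_sum_eq (fun q => g (shiftEnv (vd q) ω) j) (fun c => h1 j c)
    have hsum : ∑ q : Fin d × Bool, g (shiftEnv (vd q) ω) j
        = (2*(d:ℝ)) * g (shiftEnv (vd p) ω) j := by
      rw [Finset.sum_congr rfl fun q _ => hall q p, Finset.sum_const, Finset.card_univ]
      simp only [Fintype.card_prod, Fintype.card_fin, Fintype.card_bool, nsmul_eq_mul]
      push_cast
      ring
    have h3 := h2 j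
    rw [hsum] at h3
    exact mul_left_cancel₀ (ne_of_gt hd0) h3
  have hgen : ∀ j : Fin d, ∀ i : Fin d,
      (fun ω => g (shiftEnv (unitVec i) ω) j) =ᵐ[P] fun ω => g ω j := by
    intro j i
    filter_upwards [hmain] with ω hω
    exact hω j (i, true)
  have hinvall : ∀ j : Fin d, ∀ a : Zd d,
      (fun ω => g (shiftEnv a ω) j) =ᵐ[P] fun ω => g ω j :=
    fun j => shiftInvariant_all (ζ := fun ω => g ω j) hstat (hgen j)
  -- ergodicity: the gradient is a.s. constant, equal to its mean which is zero
  have hconst : ∀ j : Fin d, (fun ω => g ω j) =ᵐ[P] fun _ => (0:ℝ) := by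
    intro j
    obtain ⟨c, hc⟩ := ae_eq_const_of_invariant herg _ (hgm j) (hinvall j)
    have h1 : ∫ ω, g ω j ∂P = c := by
      rw [integral_congr_ae hc]
      simp [measure_univ]
    have hcz : c = 0 := by
      rw [← h1]
      exact hmean j
    rw [hcz] at hc
    exact hc
  have hzero : ∀ᵐ ω ∂P, ∀ (x : Zd d) (j : Fin d), g (shiftEnv x ω) j = 0 := by
    refine ae_all_iff.2 fun x => ae_all_iff.2 fun j => ?_
    exact (hinvall j x).trans (hconst j)
  -- conclusion
  intro x
  filter_upwards [hgx, hzero] with ω h1 h2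
  have hstep : ∀ (y : Zd d) (j : Fin d), u ω (y - unitVec j) = u ω y := by
    intro y j
    have h3 := h1 y j
    rw [h2 y j] at h3
    linarith
  exact const_of_steps (u ω) hstep x

end
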